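/- Let V be a finite set, v ∈ V, and N ⊆ V \ {v}. Let p : V → ℝ satisfy p(v) = 1/2 and 0 ≤ p(u) ≤ 1/2 for all u ∈ V, and suppose ∑_{u∈N} p(u) < 1. Let (X_u)_{u∈V} be an independent family of Bernoulli random variables with P(X_u = 1) = p(u). Then P(X_v = 1 and X_u = 0 for all u ∈ N) ≥ 1/8. -/

import Mathlib

open MeasureTheory ProbabilityTheory Finset

lemma exp_neg_mul_log_four_le {t : ℝ} (h0 : 0 ≤ t) (h1 : t ≤ 1 / 2) :
    Real.exp (-(t * Real.log 4)) ≤ 1 - t := by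
  have h4 : Real.log 4 = 2 * Real.log 2 := by
    rw [show (4:ℝ) = 2 ^ 2 by norm_num, Real.log_pow]; ring
  have key := convexOn_exp.2 (Set.mem_univ (0:ℝ)) (Set.mem_univ (-Real.log 2))
    (show (0:ℝ) ≤ 1 - 2 * t by linarith) (show (0:ℝ) ≤ 2 * t by linarith)
    (by ring : (1 - 2 * t) + 2 * t = 1)
  have he : Real.exp (-Real.log 2) = 1 / 2 := by
    rw [Real.exp_neg, Real.exp_log (by norm_num)]; norm_num
  rw [Real.exp_zero, he] at key
  have harg : (1 - 2 * t) • (0:ℝ) + (2 * t) • (-Real.log 2) = -(t * Real.log 4) := by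
    rw [h4]; simp [smul_eq_mul]; ring
  rw [harg] at key
  calc Real.exp (-(t * Real.log 4)) ≤ (1 - 2 * t) * 1 + 2 * t * (1 / 2) := by
        simpa [smul_eq_mul] using key
    _ = 1 - t := by ring

lemma prod_one_sub_ge {V : Type*} (N : Finset V) (p : V → ℝ)
    (hp : ∀ u, 0 ≤ p u ∧ p u ≤ 1 / 2) (hsum : ∑ u ∈ N, p u < 1) :
    (1 : ℝ) / 4 ≤ ∏ u ∈ N, (1 - p u) := by
  have h1 : Real.exp (-(∑ u ∈ N, p u) * Real.log 4) ≤ ∏ u ∈ N, (1 - p u) := by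
    have : Real.exp (-(∑ u ∈ N, p u) * Real.log 4)
        = ∏ u ∈ N, Real.exp (-(p u * Real.log 4)) := by
      rw [← Real.exp_sum]
      congr 1
      simp [neg_mul, Finset.sum_mul, Finset.sum_neg_distrib]
    rw [this]
    refine Finset.prod_le_prod (fun u _ => (Real.exp_pos _).le)
      (fun u _ => exp_neg_mul_log_four_le (hp u).1 (hp u).2)
  refine le_trans ?_ h1
  have h2 : Real.exp (-(1:ℝ) * Real.log 4) ≤ Real.exp (-(∑ u ∈ N, p u) * Real.log 4) := by
    apply Real.exp_le_exp.2
    have hlog : 0 ≤ Real.log 4 := Real.log_nonneg (by norm_num)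
    nlinarith
  refine le_trans ?_ h2
  rw [neg_one_mul, Real.exp_neg, Real.exp_log (by norm_num)]
  norm_num

/-- Type-1 golden round bound: if `p v = 1/2` and the sum of `p` over the
neighbors `N` of `v` is less than `1`, then `v` marks itself while no neighbor
does with probability at least `1/8`. -/
theorem stmt_7 {V : Type*} [Fintype V] [DecidableEq V]
    {Ω : Type*} [MeasurableSpace Ω] (μ : Measure Ω) [IsProbabilityMeasure μ]
    (v : V) (N : Finset V) (hN : v ∉ N)
    (p : V → ℝ) (hpv : p v = 1 / 2) (hp : ∀ u, 0 ≤ p u ∧ p u ≤ 1 / 2)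
    (hsum : ∑ u ∈ N, p u < 1)
    (X : V → Ω → Bool) (hXmeas : ∀ u, Measurable (X u))
    (hindep : iIndepFun X μ)
    (hbern : ∀ u, μ {ω | X u ω = true} = ENNReal.ofReal (p u)) :
    ENNReal.ofReal (1 / 8) ≤
      μ {ω | X v ω = true ∧ ∀ u ∈ N, X u ω = false} := by
  classical
  set f : V → Set Ω := fun u => if u = v then {ω | X u ω = true} else {ω | X u ω = false}
    with hf
  have hset : {ω | X v ω = true ∧ ∀ u ∈ N, X u ω = false} = ⋂ u ∈ insert v N, f u := by
    ext ω
    simp only [Set.mem_setOf_eq, Set.mem_iInter, Finset.mem_insert, hf]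
    constructor
    · rintro ⟨h1, h2⟩ u hu
      rcases hu with rfl | hu
      · simp [h1]
      · have hne : u ≠ v := fun h => hN (h ▸ hu)
        simp [hne, h2 u hu]
    · intro h
      constructor
      · have := h v (Or.inl rfl); simpa using this
      · intro u hu
        have hne : u ≠ v := fun h => hN (h ▸ hu)
        have := h u (Or.inr hu); simpa [hne] using this
  have hfmeas : ∀ u ∈ insert v N,
      MeasurableSet[MeasurableSpace.comap (X u) inferInstance] (f u) := by
    intro u _
    by_cases h : u = v
    · exact ⟨{true}, trivial, by simp [hf, h, Set.preimage, Set.ext_iff]⟩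
    · exact ⟨{false}, trivial, by simp [hf, h, Set.preimage, Set.ext_iff]⟩
  have hmeas := hindep.meas_biInter hfmeas
  have hfalse : ∀ u, μ {ω | X u ω = false} = ENNReal.ofReal (1 - p u) := by
    intro u
    have hc : {ω | X u ω = false} = {ω | X u ω = true}ᶜ := by
      ext ω; simp
    rw [hc, measure_compl ((hXmeas u) (by trivial : MeasurableSet {true})
        |>.congr (by ext ω; simp [Set.preimage])) (measure_ne_top μ _), hbern u,
      measure_univ, ENNReal.ofReal_sub _ (hp u).1, ENNReal.ofReal_one]
  have hμval : μ {ω | X v ω = true ∧ ∀ u ∈ N, X u ω = false}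
      = ENNReal.ofReal (p v * ∏ u ∈ N, (1 - p u)) := by
    rw [hset, hmeas, Finset.prod_insert hN]
    have hv : μ (f v) = ENNReal.ofReal (p v) := by
      simp only [hf, if_pos rfl]; exact hbern v
    have hu : ∀ u ∈ N, μ (f u) = ENNReal.ofReal (1 - p u) := by
      intro u hu
      have hne : u ≠ v := fun h => hN (h ▸ hu)
      simp only [hf, if_neg hne]; exact hfalse u
    rw [hv, Finset.prod_congr rfl hu,
      ← ENNReal.ofReal_prod_of_nonneg (fun u hu => by linarith [(hp u).2]),
      ← ENNReal.ofReal_mul (by rw [hpv]; norm_num)]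
  rw [hμval]
  apply ENNReal.ofReal_le_ofReal
  have := prod_one_sub_ge N p hp hsum
  rw [hpv]
  nlinarith
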